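/- (Proposition 4.20: the classes C_1 and C_2 of p-groups coincide.) Let p be a prime. Call a finite group E an extraspecial p-group if E is a p-group whose center Z(E) has order p, equals the commutator subgroup [E,E], and E/Z(E) is a nontrivial elementary abelian p-group. Then for a finite group G the following are equivalent: (i) G has a normal subgroup N of order p such that G/N is an elementary abelian p-group; (ii) there exist an extraspecial p-group E and a subgroup H of E with Z(E) ≤ H such that G is isomorphic to H. -/

import Mathlib

set_option maxHeartbeats 1000000


/-- A finite group `E` is extraspecial (for the prime `p`) if it is a `p`-group whose
center has order `p` and equals the commutator subgroup, and `E/Z(E)` is a nontrivial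
elementary abelian `p`-group. -/
def IsExtraspecial (p : ℕ) (E : Type*) [Group E] : Prop :=
  IsPGroup p E ∧
  Nat.card (Subgroup.center E) = p ∧
  Subgroup.center E = commutator E ∧
  (∀ g : E ⧸ Subgroup.center E, g ^ p = 1) ∧
  Nontrivial (E ⧸ Subgroup.center E)

open scoped commutatorElement

section Central

variable {K : Type u} [Group K] {p : ℕ}

/-- A normal subgroup of order `p` is central when all `p`-th powers lie in it. -/
lemma central_of_small (hp : p.Prime) (N : Subgroup K) (hN : N.Normal)
    (hcard : Nat.card N = p) (hpow : ∀ g : K, g ^ p ∈ N) :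
    ∀ n ∈ N, ∀ g : K, g * n = n * g := by
  haveI : Fact p.Prime := ⟨hp⟩
  haveI : Finite N := Nat.finite_of_card_ne_zero (by rw [hcard]; exact hp.pos.ne')
  haveI : Nontrivial N := Finite.one_lt_card_iff_nontrivial.1 (by rw [hcard]; exact hp.one_lt)
  obtain ⟨x, hx1⟩ := exists_ne (1 : N)
  have hordx : orderOf (x : K) = p := by
    have h0 : orderOf (x : K) = orderOf x := orderOf_injective N.subtype N.subtype_injective x
    rw [h0]
    rcases (hp.eq_one_or_self_of_dvd _ (hcard ▸ orderOf_dvd_natCard x)) with h | h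
    · exact absurd (orderOf_eq_one_iff.1 h) hx1
    · exact h
  have hzp : Subgroup.zpowers (x : K) = N := by
    refine Subgroup.eq_of_le_of_card_ge (Subgroup.zpowers_le.2 x.2) ?_
    rw [hcard, Nat.card_zpowers, hordx]
  have hconj : ∀ g : K, g * ↑x * g⁻¹ = (x : K) := by
    intro g
    have hmem : g * ↑x * g⁻¹ ∈ Subgroup.zpowers (x : K) := by
      rw [hzp]; exact hN.conj_mem _ x.2 g
    obtain ⟨m, hm⟩ := Subgroup.mem_zpowers_iff.1 hmem
    have key : ∀ j : ℕ, g ^ j * ↑x * (g ^ j)⁻¹ = (x : K) ^ (m ^ j) := by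
      intro j
      induction j with
      | zero => simp
      | succ j ih =>
        rw [pow_succ' g, mul_inv_rev, show g * g ^ j * ↑x * ((g ^ j)⁻¹ * g⁻¹) =
          g * (g ^ j * ↑x * (g ^ j)⁻¹) * g⁻¹ by group, ih, ← conj_zpow, ← hm, ← zpow_mul,
          ← pow_succ']
    have hgp : g ^ p ∈ Subgroup.zpowers (x : K) := by rw [hzp]; exact hpow g
    obtain ⟨s, hs⟩ := Subgroup.mem_zpowers_iff.1 hgp
    have hfix : g ^ p * ↑x * (g ^ p)⁻¹ = (x : K) := by
      rw [← hs, show (x:K) ^ s * ↑x * ((x:K) ^ s)⁻¹ =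
        (x:K) ^ s * (x:K) ^ (1:ℤ) * (x:K) ^ (-s) by rw [zpow_one, zpow_neg], ← zpow_add,
        ← zpow_add]
      norm_num
    have hmp : (x : K) ^ (m ^ p) = (x : K) := by rw [← key p, hfix]
    have hdvd : ((p : ℤ)) ∣ m ^ p - 1 := by
      have hiff := orderOf_dvd_iff_zpow_eq_one (x := (x : K)) (i := m ^ p - 1)
      rw [hordx] at hiff
      rw [hiff, zpow_sub, hmp, zpow_one, mul_inv_cancel]
    have hm1 : ((p : ℤ)) ∣ m - 1 := by
      have h1 : ((m : ZMod p)) ^ p = 1 := by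
        have h0 := (ZMod.intCast_zmod_eq_zero_iff_dvd (m ^ p - 1) p).2 hdvd
        push_cast at h0
        linear_combination h0
      have h2 : ((m : ZMod p)) = 1 := by rw [← ZMod.pow_card (m : ZMod p), h1]
      have h3 : ((m - 1 : ℤ) : ZMod p) = 0 := by push_cast; rw [h2]; ring
      exact (ZMod.intCast_zmod_eq_zero_iff_dvd _ _).1 h3
    have hx1m : (x : K) ^ m = (x : K) ^ (1 : ℤ) := by
      rw [zpow_eq_zpow_iff_modEq, hordx]
      exact (Int.modEq_iff_dvd.2 hm1).symm
    rw [← hm, hx1m, zpow_one]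
  intro n hn g
  have hnz : n ∈ Subgroup.zpowers (x : K) := by rw [hzp]; exact hn
  obtain ⟨t, ht⟩ := Subgroup.mem_zpowers_iff.1 hnz
  have : g * n * g⁻¹ = n := by
    rw [← ht, show g * (x:K) ^ t * g⁻¹ = (g * ↑x * g⁻¹) ^ t from (conj_zpow).symm, hconj]
  exact mul_inv_eq_iff_eq_mul.mp this
end Central


section Construction

universe u

variable {K : Type u} [Group K] {p : ℕ}

/-- Data of an embedding of the cyclic group of order `p` as a central subgroup `N`. -/
structure IotaData (N : Subgroup K) (p : ℕ) : Type u where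
  ι : Multiplicative (ZMod p) →* K
  mem : ∀ c, ι c ∈ N
  central : ∀ (c) (g : K), g * ι c = ι c * g
  inj : Function.Injective ι
  surj : ∀ n ∈ N, ∃ c, ι c = n

lemma exists_iotaData (hp : p.Prime) (N : Subgroup K)
    (hcard : Nat.card N = p) (hcen : ∀ n ∈ N, ∀ g : K, g * n = n * g) :
    Nonempty (IotaData N p) := by
  haveI : Fact p.Prime := ⟨hp⟩
  haveI : NeZero p := ⟨hp.pos.ne'⟩
  haveI : Finite N := Nat.finite_of_card_ne_zero (by rw [hcard]; exact hp.pos.ne')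
  haveI : Nontrivial N := Finite.one_lt_card_iff_nontrivial.1 (by rw [hcard]; exact hp.one_lt)
  obtain ⟨x, hx1⟩ := exists_ne (1 : N)
  have hordx : orderOf (x : K) = p := by
    have h0 : orderOf (x : K) = orderOf x := orderOf_injective N.subtype N.subtype_injective x
    rw [h0]
    rcases (hp.eq_one_or_self_of_dvd _ (hcard ▸ orderOf_dvd_natCard x)) with h | h
    · exact absurd (orderOf_eq_one_iff.1 h) hx1
    · exact h
  have hzp : Subgroup.zpowers (x : K) = N := by
    refine Subgroup.eq_of_le_of_card_ge (Subgroup.zpowers_le.2 x.2) ?_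
    rw [hcard, Nat.card_zpowers, hordx]
  have hpowval : ∀ a b : ZMod p, (x : K) ^ (a + b).val = (x:K) ^ a.val * (x:K) ^ b.val := by
    intro a b
    rw [← pow_add, pow_eq_pow_iff_modEq, hordx, ZMod.val_add]
    exact (Nat.mod_modEq _ _)
  refine ⟨⟨MonoidHom.mk' (fun c => (x : K) ^ (Multiplicative.toAdd c).val)
      (fun a b => hpowval _ _), ?_, ?_, ?_, ?_⟩⟩
  · intro c; exact N.pow_mem x.2 _
  · intro c g; exact hcen _ (N.pow_mem x.2 _) g
  · intro c c' h
    simp only [MonoidHom.mk'_apply] at h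
    rw [pow_eq_pow_iff_modEq, hordx] at h
    have := (Nat.ModEq.eq_of_lt_of_lt h (ZMod.val_lt _) (ZMod.val_lt _))
    exact Multiplicative.toAdd.injective (ZMod.val_injective p this)
  · intro n hn
    have hnz : n ∈ Subgroup.zpowers (x : K) := by rw [hzp]; exact hn
    obtain ⟨t, ht⟩ := Subgroup.mem_zpowers_iff.1 hnz
    refine ⟨Multiplicative.ofAdd ((t : ZMod p)), ?_⟩
    show (x : K) ^ ((t : ZMod p)).val = n
    rw [← ht, ← zpow_natCast, zpow_eq_zpow_iff_modEq, hordx]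
    have : (((((t : ZMod p)).val : ℤ)) : ZMod p) = ((t : ℤ) : ZMod p) := by
      push_cast
      rw [ZMod.natCast_val, ZMod.cast_id]
    rwa [ZMod.intCast_eq_intCast_iff] at this

lemma sep_aux {p : ℕ} [Fact p.Prime] {A : Type v} [AddCommGroup A] [Module (ZMod p) A]
    {a : A} (ha : a ≠ 0) : ∃ f : A →+ ZMod p, f a ≠ 0 := by
  have hnall : ¬ ∀ φ : A →ₗ[ZMod p] ZMod p, φ a = 0 := by
    intro h
    exact ha ((Module.forall_dual_apply_eq_zero_iff (ZMod p) _).1 h)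
  obtain ⟨φ, hφ⟩ := not_forall.1 hnall
  exact ⟨φ.toAddMonoidHom, hφ⟩

lemma exists_sep_char {V : Type v} [Group V] (hp : p.Prime)
    (hc : ∀ a b : V, a * b = b * a) (hpow : ∀ v : V, v ^ p = 1) {v : V} (hv : v ≠ 1) :
    ∃ χ : V →* Multiplicative (ZMod p), χ v ≠ 1 := by
  haveI : Fact p.Prime := ⟨hp⟩
  letI cg : CommGroup V := { (inferInstance : Group V) with mul_comm := hc }
  letI : Module (ZMod p) (Additive V) := AddCommGroup.zmodModule (by
    intro y
    show p • y = 0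
    rw [← ofMul_toMul y, ← ofMul_pow, hpow]
    rfl)
  have hv' : (Additive.ofMul v : Additive V) ≠ 0 := hv
  obtain ⟨f, hf⟩ := sep_aux (p := p) (A := Additive V) hv'
  refine ⟨MonoidHom.mk' (fun w => Multiplicative.ofAdd (f (Additive.ofMul w))) (fun a b => ?_), ?_⟩
  · show Multiplicative.ofAdd (f (Additive.ofMul a + Additive.ofMul b)) = _
    rw [map_add]
    rfl
  · simpa using hf


variable {N : Subgroup K} [N.Normal]

/-- The carrier of the extraspecial-type extension. -/
@[ext] structure ExtGrp (d : IotaData N p) : Type u where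
  fst : K
  snd : (K ⧸ N) →* Multiplicative (ZMod p)

namespace ExtGrp

variable (d : IotaData N p)

lemma mk_iota (g : K) (c : Multiplicative (ZMod p)) :
    ((g * d.ι c : K) : K ⧸ N) = (g : K ⧸ N) := by
  rw [QuotientGroup.mk_mul, (QuotientGroup.eq_one_iff _).2 (d.mem c), mul_one]

lemma move (c : Multiplicative (ZMod p)) (a b : K) :
    a * d.ι c * b = a * b * d.ι c := by
  rw [mul_assoc, ← d.central, ← mul_assoc]

lemma shuffle {i j k : K} (x y z : K) (hi : ∀ g : K, i*g=g*i) (hj : ∀ g : K, j*g=g*j) :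
    (x*y*i)*z*(j*k) = x*(y*z*k)*(i*j) := by
  simp only [mul_assoc]
  congr 1; congr 1
  rw [hi, mul_assoc]
  congr 1
  rw [hj, mul_assoc, hj]

instance : Group (ExtGrp d) where
  mul x y := ⟨x.fst * y.fst * d.ι (y.snd x.fst), x.snd * y.snd⟩
  one := ⟨1, 1⟩
  inv x := ⟨x.fst⁻¹ * d.ι (x.snd x.fst), x.snd⁻¹⟩
  mul_assoc x y z := by
    refine ExtGrp.ext ?_ ?_
    · show (x.fst * y.fst * d.ι (y.snd x.fst)) * z.fst *
          d.ι (z.snd ((x.fst * y.fst * d.ι (y.snd x.fst) : K) : K ⧸ N)) =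
        x.fst * (y.fst * z.fst * d.ι (z.snd y.fst)) *
          d.ι ((y.snd * z.snd) x.fst)
      rw [mk_iota, QuotientGroup.mk_mul, map_mul z.snd, map_mul d.ι, MonoidHom.mul_apply,
        map_mul d.ι]
      exact shuffle _ _ _ (fun g => (d.central _ g).symm) (fun g => (d.central _ g).symm)
    · show (x.snd * y.snd) * z.snd = x.snd * (y.snd * z.snd)
      rw [mul_assoc]
  one_mul x := by
    refine ExtGrp.ext ?_ ?_
    · show (1 : K) * x.fst * d.ι (x.snd ((1 : K) : K ⧸ N)) = x.fst
      simp
    · show 1 * x.snd = x.snd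
      simp
  mul_one x := by
    refine ExtGrp.ext ?_ ?_
    · show x.fst * 1 * d.ι ((1 : (K ⧸ N) →* Multiplicative (ZMod p)) (x.fst : K ⧸ N)) = x.fst
      simp
    · show x.snd * 1 = x.snd
      simp
  inv_mul_cancel x := by
    refine ExtGrp.ext ?_ ?_
    · show x.fst⁻¹ * d.ι (x.snd x.fst) * x.fst *
        d.ι (x.snd ((x.fst⁻¹ * d.ι (x.snd x.fst) : K) : K ⧸ N)) = 1
      rw [mk_iota, move, QuotientGroup.mk_inv, map_inv, inv_mul_cancel, one_mul, ← map_mul,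
        mul_inv_cancel, map_one]
    · show x.snd⁻¹ * x.snd = 1
      simp

lemma mul_def (x y : ExtGrp d) :
    x * y = ⟨x.fst * y.fst * d.ι (y.snd x.fst), x.snd * y.snd⟩ := rfl

lemma one_def : (1 : ExtGrp d) = ⟨1, 1⟩ := rfl

lemma inv_def (x : ExtGrp d) : x⁻¹ = ⟨x.fst⁻¹ * d.ι (x.snd x.fst), x.snd⁻¹⟩ := rfl

def emb : K →* ExtGrp d := MonoidHom.mk' (fun g => ⟨g, 1⟩) (by
  intro a b
  refine (ExtGrp.ext ?_ ?_ : (⟨a * b, 1⟩ : ExtGrp d) = ⟨a, 1⟩ * ⟨b, 1⟩)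
  · show a * b = a * b * d.ι ((1 : (K ⧸ N) →* Multiplicative (ZMod p)) ((a : K) : K ⧸ N))
    simp
  · show (1 : (K ⧸ N) →* Multiplicative (ZMod p)) = 1 * 1
    simp)

lemma emb_injective : Function.Injective (emb d) := by
  intro a b h
  exact congrArg ExtGrp.fst h

def fstbar : ExtGrp d →* K ⧸ N := MonoidHom.mk' (fun x => (x.fst : K ⧸ N)) (by
  intro a b
  show ((a.fst * b.fst * d.ι (b.snd a.fst) : K) : K ⧸ N) = (a.fst : K ⧸ N) * (b.fst : K ⧸ N)
  rw [mk_iota, QuotientGroup.mk_mul])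

def sndHom : ExtGrp d →* ((K ⧸ N) →* Multiplicative (ZMod p)) :=
  MonoidHom.mk' (fun x => x.snd) (fun _ _ => rfl)

lemma mem_center_iff (hcen : ∀ n ∈ N, ∀ g : K, g * n = n * g)
    (hsep : ∀ v : K ⧸ N, v ≠ 1 → ∃ χ : (K ⧸ N) →* Multiplicative (ZMod p), χ v ≠ 1)
    (x : ExtGrp d) :
    x ∈ Subgroup.center (ExtGrp d) ↔ x.fst ∈ N ∧ x.snd = 1 := by
  rw [Subgroup.mem_center_iff]
  constructor
  · intro h
    have hfst : x.fst ∈ N := by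
      by_contra hne
      have hv : ((x.fst : K) : K ⧸ N) ≠ 1 := by
        simpa [QuotientGroup.eq_one_iff] using hne
      obtain ⟨χ, hχ⟩ := hsep _ hv
      have e1' : (1 : K) * x.fst * d.ι (x.snd ((1 : K) : K ⧸ N)) =
          x.fst * 1 * d.ι (χ ((x.fst : K) : K ⧸ N)) := congrArg ExtGrp.fst (h ⟨1, χ⟩)
      simp only [one_mul, mul_one, QuotientGroup.mk_one, map_one] at e1'
      have h1 : d.ι (χ ((x.fst : K) : K ⧸ N)) = d.ι 1 := by
        rw [left_eq_mul.1 e1', map_one]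
      exact hχ (d.inj h1)
    refine ⟨hfst, ?_⟩
    refine MonoidHom.ext fun v => ?_
    obtain ⟨g, rfl⟩ := QuotientGroup.mk_surjective v
    have e1' : g * x.fst * d.ι (x.snd ((g : K) : K ⧸ N)) =
        x.fst * g * d.ι ((1 : (K ⧸ N) →* Multiplicative (ZMod p)) ((x.fst : K) : K ⧸ N)) :=
      congrArg ExtGrp.fst (h ⟨g, 1⟩)
    simp only [MonoidHom.one_apply, map_one, mul_one] at e1'
    rw [← hcen x.fst hfst g] at e1'
    have h2 : d.ι (x.snd ((g : K) : K ⧸ N)) = d.ι 1 := by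
      rw [left_eq_mul.1 e1'.symm, map_one]
    exact d.inj h2
  · rintro ⟨h1, h2⟩ g
    refine ExtGrp.ext ?_ ?_
    · show g.fst * x.fst * d.ι (x.snd g.fst) = x.fst * g.fst * d.ι (g.snd x.fst)
      have hq : ((x.fst : K) : K ⧸ N) = 1 := (QuotientGroup.eq_one_iff _).2 h1
      rw [h2, hq]
      simp only [MonoidHom.one_apply, map_one, mul_one]
      exact hcen _ h1 g.fst
    · show g.snd * x.snd = x.snd * g.snd
      exact mul_comm _ _

end ExtGrp

end Construction


theorem construction {K : Type u} [Group K] [Finite K] {p : ℕ} (hp : p.Prime)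
    (N : Subgroup K) [hN : N.Normal] (hcard : Nat.card N = p)
    (hcomm : ∀ a b : K, ⁅a, b⁆ ∈ N) (hpow : ∀ g : K, g ^ p ∈ N) (hne : N ≠ ⊤) :
    ∃ (E : Type u) (_ : Group E) (_ : Finite E), IsExtraspecial p E ∧
      ∃ j : K →* E, Function.Injective j ∧ Subgroup.center E = N.map j := by
  haveI : Fact p.Prime := ⟨hp⟩
  haveI : NeZero p := ⟨hp.pos.ne'⟩
  have hcen := central_of_small hp N hN hcard hpow
  obtain ⟨d⟩ := exists_iotaData hp N hcard hcen
  have hVcomm : ∀ a b : K ⧸ N, a * b = b * a := by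
    intro a b
    obtain ⟨a, rfl⟩ := QuotientGroup.mk_surjective a
    obtain ⟨b, rfl⟩ := QuotientGroup.mk_surjective b
    rw [← QuotientGroup.mk_mul, ← QuotientGroup.mk_mul, QuotientGroup.eq,
      show (a * b)⁻¹ * (b * a) = ⁅b⁻¹, a⁻¹⁆ by group]
    exact hcomm _ _
  have hVpow : ∀ v : K ⧸ N, v ^ p = 1 := by
    intro v; obtain ⟨g, rfl⟩ := QuotientGroup.mk_surjective v
    rw [← QuotientGroup.mk_pow, QuotientGroup.eq_one_iff]
    exact hpow g
  have hsep : ∀ v : K ⧸ N, v ≠ 1 → ∃ χ : (K ⧸ N) →* Multiplicative (ZMod p), χ v ≠ 1 :=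
    fun v hv => exists_sep_char hp hVcomm hVpow hv
  have hCp : ∀ c : Multiplicative (ZMod p), c ^ p = 1 := by
    intro c
    apply Multiplicative.toAdd.injective
    show p • c.toAdd = 0
    rw [nsmul_eq_mul, ZMod.natCast_self, zero_mul]
  haveI : Finite ((K ⧸ N) →* Multiplicative (ZMod p)) :=
    Finite.of_injective (fun f => (f : (K ⧸ N) → Multiplicative (ZMod p))) DFunLike.coe_injective
  haveI : Finite (ExtGrp d) := Finite.of_injective
    (fun x : ExtGrp d => (x.fst, x.snd))
    (by rintro ⟨a1, a2⟩ ⟨b1, b2⟩ h; simpa [Prod.ext_iff, ExtGrp.ext_iff] using h)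
  set E := ExtGrp d with hE
  have hZ := ExtGrp.mem_center_iff d hcen hsep
  have hxp : ∀ x : E, x ^ p ∈ Subgroup.center E := by
    intro x
    rw [hZ]
    refine ⟨?_, ?_⟩
    · have h1 : ExtGrp.fstbar d (x ^ p) = 1 := by
        rw [map_pow]
        exact hVpow _
      exact (QuotientGroup.eq_one_iff _).1 h1
    · have h2 : ExtGrp.sndHom d (x ^ p) = 1 := by
        rw [map_pow]
        refine MonoidHom.ext fun v => ?_
        rw [MonoidHom.pow_apply, hCp, MonoidHom.one_apply]
      exact h2
  have hcmap : Subgroup.center E = N.map (ExtGrp.emb d) := by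
    ext x
    rw [hZ, Subgroup.mem_map]
    constructor
    · rintro ⟨h1, h2⟩
      exact ⟨x.fst, h1, (ExtGrp.ext rfl h2.symm : (ExtGrp.emb d) x.fst = x)⟩
    · rintro ⟨n, hn, rfl⟩
      exact ⟨hn, rfl⟩
  have hcardZ : Nat.card (Subgroup.center E) = p := by
    rw [hcmap]
    exact (Nat.card_congr
      (Subgroup.equivMapOfInjective N _ (ExtGrp.emb_injective d)).toEquiv).symm.trans hcard
  have hcomm_le : commutator E ≤ Subgroup.center E := by
    rw [commutator_def, Subgroup.commutator_le]
    intro g1 _ g2 _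
    rw [hZ]
    refine ⟨?_, ?_⟩
    · have h1 : ExtGrp.fstbar d ⁅g1, g2⁆ = 1 := by
        rw [map_commutatorElement]
        exact commutatorElement_eq_one_iff_mul_comm.2 (hVcomm _ _)
      exact (QuotientGroup.eq_one_iff _).1 h1
    · have h2 : ExtGrp.sndHom d ⁅g1, g2⁆ = 1 := by
        rw [map_commutatorElement]
        exact commutatorElement_eq_one_iff_mul_comm.2 (mul_comm _ _)
      exact h2
  obtain ⟨g₀, hg₀⟩ : ∃ g₀ : K, g₀ ∉ N := by
    by_contra h; push_neg at h; exact hne ((Subgroup.eq_top_iff' N).2 h)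
  have hvg₀ : ((g₀ : K) : K ⧸ N) ≠ 1 := by simpa [QuotientGroup.eq_one_iff] using hg₀
  obtain ⟨χ₀, hχ₀⟩ := hsep _ hvg₀
  have hzne : ⁅(⟨g₀, 1⟩ : E), (⟨1, χ₀⟩ : E)⁆ ≠ 1 := by
    rw [Ne, commutatorElement_eq_one_iff_mul_comm]
    intro hab
    have e1 : g₀ * 1 * d.ι (χ₀ ((g₀ : K) : K ⧸ N)) =
        1 * g₀ * d.ι ((1 : (K ⧸ N) →* Multiplicative (ZMod p)) ((1 : K) : K ⧸ N)) :=
      congrArg ExtGrp.fst hab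
    simp only [one_mul, mul_one, map_one, MonoidHom.one_apply] at e1
    exact hχ₀ (d.inj (by rw [map_one]; exact left_eq_mul.1 e1.symm))
  have hzZ : ⁅(⟨g₀, 1⟩ : E), (⟨1, χ₀⟩ : E)⁆ ∈ Subgroup.center E :=
    hcomm_le (Subgroup.commutator_mem_commutator (Subgroup.mem_top _) (Subgroup.mem_top _))
  have hZle : Subgroup.center E ≤ commutator E := by
    have hord : orderOf (⟨⁅(⟨g₀, 1⟩ : E), (⟨1, χ₀⟩ : E)⁆, hzZ⟩ : Subgroup.center E) = p := by
      rcases hp.eq_one_or_self_of_dvd _ (hcardZ ▸ orderOf_dvd_natCard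
        (⟨⁅(⟨g₀, 1⟩ : E), (⟨1, χ₀⟩ : E)⁆, hzZ⟩ : Subgroup.center E)) with h | h
      · exfalso; exact hzne (by simpa [Subtype.ext_iff] using orderOf_eq_one_iff.1 h)
      · exact h
    have hordz : orderOf ⁅(⟨g₀, 1⟩ : E), (⟨1, χ₀⟩ : E)⁆ = p := by
      have h4 := orderOf_injective (Subgroup.center E).subtype
        (Subgroup.center E).subtype_injective
        (⟨⁅(⟨g₀, 1⟩ : E), (⟨1, χ₀⟩ : E)⁆, hzZ⟩ : Subgroup.center E)
      rw [hord] at h4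
      exact h4
    have hzpz : Subgroup.zpowers ⁅(⟨g₀, 1⟩ : E), (⟨1, χ₀⟩ : E)⁆ = Subgroup.center E := by
      refine Subgroup.eq_of_le_of_card_ge (Subgroup.zpowers_le.2 hzZ) ?_
      rw [hcardZ, Nat.card_zpowers, hordz]
    rw [← hzpz, Subgroup.zpowers_le]
    exact Subgroup.commutator_mem_commutator (Subgroup.mem_top _) (Subgroup.mem_top _)
  have hZeq : Subgroup.center E = commutator E := le_antisymm hZle hcomm_le
  have hquot : ∀ g : E ⧸ Subgroup.center E, g ^ p = 1 := by
    intro g; obtain ⟨x, rfl⟩ := QuotientGroup.mk_surjective g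
    rw [← QuotientGroup.mk_pow, QuotientGroup.eq_one_iff]
    exact hxp x
  have hnontriv : Nontrivial (E ⧸ Subgroup.center E) := by
    refine ⟨⟨((⟨g₀, 1⟩ : E) : E ⧸ Subgroup.center E), 1, ?_⟩⟩
    rw [Ne, QuotientGroup.eq_one_iff, hZ]
    rintro ⟨h1, -⟩
    exact hg₀ h1
  have hpg : IsPGroup p E := by
    intro x
    refine ⟨2, ?_⟩
    rw [show p ^ 2 = p * p from pow_two p, pow_mul]
    have hx := hxp x
    rw [hcmap, Subgroup.mem_map] at hx
    obtain ⟨n, hn, hxn⟩ := hx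
    rw [← hxn, ← map_pow]
    have hnp : n ^ p = 1 := by
      have h3 : (⟨n, hn⟩ : N) ^ p = 1 := by rw [← hcard]; exact pow_card_eq_one'
      simpa [Subtype.ext_iff] using h3
    rw [hnp, map_one]
  exact ⟨E, inferInstance, inferInstance, ⟨hpg, hcardZ, hZeq, hquot, hnontriv⟩,
    ExtGrp.emb d, ExtGrp.emb_injective d, hcmap⟩


section Assemble

universe w

def ClassC1 (p : ℕ) (G : Type*) [Group G] : Prop :=
  ∃ N : Subgroup G, N.Normal ∧ Nat.card N = p ∧
    (∀ a b : G, ⁅a, b⁆ ∈ N) ∧ (∀ g : G, g ^ p ∈ N)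

lemma classC1_of_mulEquiv {p : ℕ} {G G' : Type*} [Group G] [Group G']
    (e : G' ≃* G) : ClassC1 p G → ClassC1 p G' := by
  rintro ⟨N, hnorm, hcard, hcomm, hpow⟩
  refine ⟨N.comap e.toMonoidHom, hnorm.comap _, ?_, ?_, ?_⟩
  · have h1 := Subgroup.map_equiv_eq_comap_symm e.symm N
    rw [MulEquiv.symm_symm] at h1
    rw [show N.comap e.toMonoidHom = N.comap (e : G' →* G) from rfl, ← h1]
    exact (Nat.card_congr (e.symm.subgroupMap N).toEquiv).symm.trans hcard
  · intro a b
    have h2 : e.toMonoidHom ⁅a, b⁆ ∈ N := by rw [map_commutatorElement]; exact hcomm _ _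
    exact h2
  · intro g
    have h2 : e.toMonoidHom (g ^ p) ∈ N := by rw [map_pow]; exact hpow _
    exact h2

lemma classC1_of_subgroup {p : ℕ} {E : Type w} [Group E]
    (hE : IsExtraspecial p E) (H : Subgroup E) (hle : Subgroup.center E ≤ H) :
    ClassC1 p H := by
  obtain ⟨hpg, hcard, hZC, hquot, hnt⟩ := hE
  have hcommZ : ∀ a b : H, ⁅a, b⁆ ∈ (Subgroup.center E).subgroupOf H := by
    intro a b
    rw [Subgroup.mem_subgroupOf]
    have h1 : (H.subtype ⁅a, b⁆ : E) ∈ commutator E := by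
      rw [map_commutatorElement, commutator_def]
      exact Subgroup.commutator_mem_commutator (Subgroup.mem_top _) (Subgroup.mem_top _)
    rw [hZC]
    exact h1
  refine ⟨(Subgroup.center E).subgroupOf H, ?_, ?_, hcommZ, ?_⟩
  · constructor
    intro n hn g
    have h1 : g * n * g⁻¹ = ⁅g, n⁆ * n := by group
    rw [h1]
    exact Subgroup.mul_mem _ (hcommZ g n) hn
  · exact (Nat.card_congr (Subgroup.subgroupOfEquivOfLe hle).toEquiv).trans hcard
  · intro g
    rw [Subgroup.mem_subgroupOf]
    have h2 := hquot (((g : E) : E ⧸ Subgroup.center E))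
    rw [← QuotientGroup.mk_pow, QuotientGroup.eq_one_iff] at h2
    rw [Subgroup.coe_pow]
    exact h2

lemma center_mulEquiv_comap {A : Type u} {B : Type v} [Group A] [Group B] (e : A ≃* B) :
    Subgroup.center A = (Subgroup.center B).comap (e : A →* B) := by
  ext x
  rw [Subgroup.mem_comap, Subgroup.mem_center_iff, Subgroup.mem_center_iff]
  constructor
  · intro h b
    obtain ⟨a, rfl⟩ := e.surjective b
    show e a * e x = e x * e a
    rw [← map_mul, ← map_mul, h]
  · intro h y
    apply e.injective
    show e (y * x) = e (x * y)
    rw [map_mul, map_mul]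
    exact h (e y)

lemma isExtraspecial_of_mulEquiv {p : ℕ} {A : Type u} {B : Type v} [Group A] [Group B]
    (e : A ≃* B) (hE : IsExtraspecial p B) : IsExtraspecial p A := by
  obtain ⟨hpg, hcard, hZC, hquot, hnt⟩ := hE
  have hcc := center_mulEquiv_comap e
  have hmapc : (Subgroup.center B).map (e.symm : B →* A) = Subgroup.center A := by
    have h1 := Subgroup.map_equiv_eq_comap_symm e.symm (Subgroup.center B)
    rw [MulEquiv.symm_symm] at h1
    rw [h1, ← hcc]
  refine ⟨?_, ?_, ?_, ?_, ?_⟩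
  · intro x
    obtain ⟨k, hk⟩ := hpg (e x)
    exact ⟨k, e.injective (by rw [map_pow, hk, map_one])⟩
  · rw [← hmapc]
    exact (Nat.card_congr (e.symm.subgroupMap _).toEquiv).symm.trans hcard
  · have hcom : Subgroup.map (e : A →* B) (commutator A) = commutator B := by
      rw [commutator_def, commutator_def, Subgroup.map_commutator,
        Subgroup.map_top_of_surjective _ e.surjective]
    rw [hcc, hZC, ← hcom, Subgroup.comap_map_eq_self_of_injective e.injective]
  · intro g
    obtain ⟨x, rfl⟩ := QuotientGroup.mk_surjective g
    rw [← QuotientGroup.mk_pow, QuotientGroup.eq_one_iff, hcc, Subgroup.mem_comap, map_pow]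
    have h2 := hquot ((e x : B ⧸ Subgroup.center B))
    rwa [← QuotientGroup.mk_pow, QuotientGroup.eq_one_iff] at h2
  · haveI := hnt
    obtain ⟨q, hq⟩ := exists_ne (1 : B ⧸ Subgroup.center B)
    obtain ⟨b, rfl⟩ := QuotientGroup.mk_surjective q
    have hb : b ∉ Subgroup.center B := fun hb => hq ((QuotientGroup.eq_one_iff _).2 hb)
    refine ⟨⟨((e.symm b : A) : A ⧸ Subgroup.center A), 1, ?_⟩⟩
    rw [Ne, QuotientGroup.eq_one_iff, hcc, Subgroup.mem_comap]
    intro hmem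
    exact hb (by rwa [show (e : A →* B) (e.symm b) = b from e.apply_symm_apply b] at hmem)

end Assemble

/-- Proposition 4.20: the classes `C₁` and `C₂` of `p`-groups coincide. A finite group
`G` has a normal subgroup `N` of order `p` with `G/N` elementary abelian iff `G` is
isomorphic to a subgroup `H` of an extraspecial `p`-group `E` with `Z(E) ≤ H`. -/
theorem classC1_eq_classC2 (p : ℕ) (hp : p.Prime)
    (G : Type*) [Group G] [Finite G] :
    (∃ N : Subgroup G, N.Normal ∧ Nat.card N = p ∧
        (∀ a b : G, ⁅a, b⁆ ∈ N) ∧ (∀ g : G, g ^ p ∈ N)) ↔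
    (∃ E : GrpCat, Finite E ∧ IsExtraspecial p E ∧
        ∃ H : Subgroup E, Subgroup.center E ≤ H ∧ Nonempty (G ≃* H)) := by
  haveI : Fact p.Prime := ⟨hp⟩
  haveI : NeZero p := ⟨hp.pos.ne'⟩
  constructor
  · rintro ⟨N, hnorm, hcard, hcomm, hpow⟩
    haveI : Small.{0} G := Countable.toSmall G
    haveI : Finite (Shrink.{0} G) := Finite.of_equiv G (equivShrink G)
    let eG : Shrink.{0} G ≃* G := Shrink.mulEquiv
    obtain ⟨N₀, h₀norm, h₀card, h₀comm, h₀pow⟩ :=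
      classC1_of_mulEquiv eG ⟨N, hnorm, hcard, hcomm, hpow⟩
    haveI := h₀norm
    let NK : Subgroup (Shrink.{0} G × Multiplicative (ZMod p)) := N₀.prod ⊥
    haveI hNKnorm : NK.Normal := by
      constructor
      intro x hx g
      rw [Subgroup.mem_prod] at hx ⊢
      refine ⟨h₀norm.conj_mem _ hx.1 g.1, ?_⟩
      have h2 : x.2 = 1 := by simpa [Subgroup.mem_bot] using hx.2
      simp [h2, Subgroup.mem_bot]
    have hcardNK : Nat.card NK = p := by
      rw [Nat.card_congr (Subgroup.prodEquiv N₀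
        (⊥ : Subgroup (Multiplicative (ZMod p)))).toEquiv, Nat.card_prod,
        Subgroup.card_bot, mul_one, h₀card]
    have hCp : ∀ c : Multiplicative (ZMod p), c ^ p = 1 := by
      intro c
      apply Multiplicative.toAdd.injective
      show p • c.toAdd = 0
      rw [nsmul_eq_mul, ZMod.natCast_self, zero_mul]
    have hcommNK : ∀ a b : Shrink.{0} G × Multiplicative (ZMod p), ⁅a, b⁆ ∈ NK := by
      intro a b
      rw [Subgroup.mem_prod]
      exact ⟨h₀comm _ _, by
        simp only [Subgroup.mem_bot]
        exact commutatorElement_eq_one_iff_mul_comm.2 (mul_comm _ _)⟩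
    have hpowNK : ∀ g : Shrink.{0} G × Multiplicative (ZMod p), g ^ p ∈ NK := by
      intro g
      rw [Subgroup.mem_prod]
      exact ⟨h₀pow _, by simp only [Subgroup.mem_bot]; exact hCp _⟩
    have hneNK : NK ≠ ⊤ := by
      intro htop
      have h1 : ((1, Multiplicative.ofAdd (1 : ZMod p)) :
          Shrink.{0} G × Multiplicative (ZMod p)) ∈ NK := by
        rw [htop]; exact Subgroup.mem_top _
      rw [Subgroup.mem_prod] at h1
      have h2 := h1.2
      rw [Subgroup.mem_bot] at h2
      exact one_ne_zero (show (1 : ZMod p) = 0 by simpa using h2)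
    obtain ⟨E₀, instE, instF, hext, j, hjinj, hjcen⟩ :=
      construction hp NK hcardNK hcommNK hpowNK hneNK
    let j' := j.comp (MonoidHom.inl (Shrink.{0} G) (Multiplicative (ZMod p)))
    have hj' : Function.Injective j' := by
      intro a b h
      exact congrArg Prod.fst (hjinj h)
    have hle : Subgroup.center E₀ ≤ j'.range := by
      rw [hjcen]
      rintro x ⟨k, hk, rfl⟩
      have hk' : k.1 ∈ N₀ ∧ k.2 ∈ (⊥ : Subgroup (Multiplicative (ZMod p))) :=
        Subgroup.mem_prod.1 hk
      have hk2 : k.2 = 1 := by simpa [Subgroup.mem_bot] using hk'.2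
      refine ⟨k.1, ?_⟩
      show j (k.1, 1) = j k
      rw [show ((k.1, 1) : Shrink.{0} G × Multiplicative (ZMod p)) = k from
        Prod.ext rfl hk2.symm]
    let isoGH : G ≃* j'.range := eG.symm.trans (MonoidHom.ofInjective hj')
    let eu : ULift E₀ ≃* E₀ := MulEquiv.ulift
    have hfin : Finite (ULift E₀) := inferInstance
    have hext' : IsExtraspecial p (ULift E₀) := isExtraspecial_of_mulEquiv eu hext
    have hfinal : ∃ H : Subgroup (ULift E₀),
        Subgroup.center (ULift E₀) ≤ H ∧ Nonempty (G ≃* H) := by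
      refine ⟨(j'.range).comap (eu : ULift E₀ →* E₀), ?_, ?_⟩
      · rw [center_mulEquiv_comap eu]
        exact Subgroup.comap_mono hle
      · have hmapH : (j'.range).map (eu.symm : E₀ →* ULift E₀) =
            (j'.range).comap (eu : ULift E₀ →* E₀) := by
          have h1 := Subgroup.map_equiv_eq_comap_symm eu.symm j'.range
          rwa [MulEquiv.symm_symm] at h1
        exact ⟨isoGH.trans ((eu.symm.subgroupMap j'.range).trans
          (MulEquiv.subgroupCongr hmapH))⟩
    exact ⟨GrpCat.of (ULift E₀), hfin, hext', hfinal⟩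
  · rintro ⟨E, hfinE, hext, H, hle, ⟨e⟩⟩
    exact classC1_of_mulEquiv e (classC1_of_subgroup hext H hle)
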